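/- A density matrix ρ on ℂ^m ⊗ ℂ^n is classical-quantum if and only if there exists an orthonormal basis e : Fin m → (Fin m → ℂ) of ℂ^m such that the dephasing of ρ in this basis fixes ρ, i.e. ∑_i ((e_i e_i*) ⊗ I_n) ρ ((e_i e_i*) ⊗ I_n) = ρ. (Equivalently: ρ has nonzero quantum discord if and only if every complete projective measurement on subsystem A perturbs ρ.) -/

import Mathlib

open Matrix Kronecker BigOperators ComplexOrder

noncomputable section

/-- Partial trace over the second factor. -/
def trB {m n : ℕ} (ρ : Matrix (Fin m × Fin n) (Fin m × Fin n) ℂ) :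
    Matrix (Fin m) (Fin m) ℂ :=
  fun i j => ∑ k : Fin n, ρ (i, k) (j, k)

/-- Partial trace over the first factor. -/
def trA {m n : ℕ} (ρ : Matrix (Fin m × Fin n) (Fin m × Fin n) ℂ) :
    Matrix (Fin n) (Fin n) ℂ :=
  fun k l => ∑ i : Fin m, ρ (i, k) (i, l)

/-- A density matrix: positive semidefinite with trace 1. -/
def IsDensityMatrix {d : Type*} [Fintype d] [DecidableEq d] (ρ : Matrix d d ℂ) : Prop :=
  ρ.PosSemidef ∧ ρ.trace = 1

/-- An orthonormal basis of ℂ^m, given as a family of m vectors. -/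
def IsONB {m : ℕ} (e : Fin m → Fin m → ℂ) : Prop :=
  ∀ i j, star (e i) ⬝ᵥ e j = if i = j then 1 else 0

/-- The rank-one matrix v v*, with entries v j * conj (v k). -/
def proj {m : ℕ} (v : Fin m → ℂ) : Matrix (Fin m) (Fin m) ℂ :=
  vecMulVec v (star v)

/-- A classical-quantum (zero-discord) state: ρ = ∑ i (eᵢ eᵢ*) ⊗ σᵢ for an
orthonormal basis e of ℂ^m and positive semidefinite σᵢ. -/
def ClassicalQuantum {m n : ℕ} (ρ : Matrix (Fin m × Fin n) (Fin m × Fin n) ℂ) : Prop :=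
  ∃ e : Fin m → Fin m → ℂ, IsONB e ∧
    ∃ σ : Fin m → Matrix (Fin n) (Fin n) ℂ,
      (∀ i, (σ i).PosSemidef) ∧ ρ = ∑ i, proj (e i) ⊗ₖ σ i

/-- A pure state: ρ = ψψ* for a unit vector ψ. -/
def IsPure {d : ℕ} (ρ : Matrix (Fin d) (Fin d) ℂ) : Prop :=
  ∃ ψ : Fin d → ℂ, star ψ ⬝ᵥ ψ = 1 ∧ ρ = vecMulVec ψ (star ψ)

lemma proj_mul_proj {m : ℕ} {e : Fin m → Fin m → ℂ} (he : IsONB e) (i j : Fin m) :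
    proj (e i) * proj (e j) = if i = j then proj (e i) else 0 := by
  have key : proj (e i) * proj (e j) = (star (e i) ⬝ᵥ e j) • vecMulVec (e i) (star (e j)) := by
    ext a b
    simp [proj, mul_apply, vecMulVec_apply, dotProduct, Finset.mul_sum, Pi.star_apply]
    rw [Finset.sum_mul]
    apply Finset.sum_congr rfl
    intro c _
    ring
  rw [key, he i j]
  split_ifs with h
  · subst h; simp [proj]
  · simp

theorem stmt4 {m n : ℕ} (ρ : Matrix (Fin m × Fin n) (Fin m × Fin n) ℂ)
    (hρ : IsDensityMatrix ρ) :
    ClassicalQuantum ρ ↔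
      ∃ e : Fin m → Fin m → ℂ, IsONB e ∧
        (∑ i, (proj (e i) ⊗ₖ (1 : Matrix (Fin n) (Fin n) ℂ)) * ρ *
            (proj (e i) ⊗ₖ (1 : Matrix (Fin n) (Fin n) ℂ))) = ρ := by
  constructor
  · rintro ⟨e, he, σ, hσ, rfl⟩
    refine ⟨e, he, ?_⟩
    have term : ∀ i j : Fin m,
        (proj (e i) ⊗ₖ (1 : Matrix (Fin n) (Fin n) ℂ)) * (proj (e j) ⊗ₖ σ j) *
          (proj (e i) ⊗ₖ (1 : Matrix (Fin n) (Fin n) ℂ))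
          = if j = i then proj (e i) ⊗ₖ σ i else 0 := by
      intro i j
      rw [← mul_kronecker_mul, ← mul_kronecker_mul, proj_mul_proj he i j, one_mul, mul_one]
      by_cases h : j = i
      · subst h
        rw [if_pos rfl, if_pos rfl, proj_mul_proj he j j, if_pos rfl]
      · rw [if_neg (fun h' => h h'.symm), if_neg h, zero_mul, zero_kronecker]
    simp only [Finset.mul_sum, Finset.sum_mul, term, Finset.sum_ite_eq', Finset.mem_univ,
      if_true]
  · rintro ⟨e, he, h⟩
    set σ : Fin m → Matrix (Fin n) (Fin n) ℂ :=
      fun i k l => ∑ a, ∑ b, star (e i a) * ρ (a, k) (b, l) * e i b with hσdef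
    have key : ∀ i : Fin m,
        (proj (e i) ⊗ₖ (1 : Matrix (Fin n) (Fin n) ℂ)) * ρ *
          (proj (e i) ⊗ₖ (1 : Matrix (Fin n) (Fin n) ℂ)) = proj (e i) ⊗ₖ σ i := by
      intro i
      ext ⟨a, k⟩ ⟨b, l⟩
      simp only [kroneckerMap_apply]
      simp only [hσdef, mul_apply, kroneckerMap_apply, one_apply, proj, vecMulVec_apply,
        Pi.star_apply, Fintype.sum_prod_type, mul_ite, mul_zero, mul_one, ite_mul, zero_mul,
        Finset.sum_ite_eq', Finset.sum_ite_eq, Finset.mem_univ, if_true]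
      simp only [Finset.sum_mul, Finset.mul_sum]
      rw [Finset.sum_comm]
      apply Finset.sum_congr rfl
      intro a' _
      apply Finset.sum_congr rfl
      intro b' _
      ring
    refine ⟨e, he, σ, ?_, ?_⟩
    · intro i
      set B : Matrix (Fin m × Fin n) (Fin n) ℂ :=
        fun p l => e i p.1 * (if p.2 = l then 1 else 0) with hB
      have hBσ : σ i = Bᴴ * ρ * B := by
        ext k l
        simp only [mul_apply, conjTranspose_apply]
        simp only [hσdef, mul_apply, conjTranspose_apply, hB, star_mul', apply_ite,
          star_one, star_zero, Fintype.sum_prod_type, mul_ite, mul_zero, mul_one,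
          ite_mul, zero_mul, one_mul, Finset.sum_ite_eq', Finset.sum_ite_eq,
          Finset.mem_univ, if_true]
        simp only [Finset.sum_mul]
        rw [Finset.sum_comm]
      rw [hBσ]
      exact hρ.1.conjTranspose_mul_mul_same B
    · conv_lhs => rw [← h]
      exact Finset.sum_congr rfl fun i _ => key i
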